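/- Let a, b, c be real numbers with 0 < b < c. Then the function u(z) = ∫₀¹ t^{b−1} (1 − t)^{c−b−1} (1 − z t)^{−a} dt, defined for z < 1, is strictly positive and satisfies the hypergeometric differential equation z(1 − z) u″(z) + ( c − (a + b + 1) z ) u′(z) − a b u(z) = 0 for every z < 1. -/

import Mathlib

open MeasureTheory

namespace EIHAux

open Set intervalIntegral

lemma rpow_shift1 {x : ℝ} (hx : x ≠ 0) {p q : ℝ} (h : q + 1 = p) :
    x ^ p = x ^ q * x := by rw [← h, Real.rpow_add_one hx]

lemma rpow_shift2 {x : ℝ} (hx : x ≠ 0) {p q : ℝ} (h : q + 1 + 1 = p) :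
    x ^ p = x ^ q * x * x := by
  rw [← h, Real.rpow_add_one hx, Real.rpow_add_one hx]

lemma rpow_bound {m M s p : ℝ} (hm : 0 < m) (h1 : m ≤ s) (h2 : s ≤ M) :
    s ^ p ≤ max (m ^ p) (M ^ p) := by
  rcases le_or_gt 0 p with hp | hp
  · exact le_max_of_le_right (Real.rpow_le_rpow (by linarith) h2 hp)
  · exact le_max_of_le_left (Real.rpow_le_rpow_of_nonpos hm h1 hp.le)

lemma pos_aux {x t : ℝ} (hx : x < 1) (ht0 : 0 ≤ t) (ht1 : t ≤ 1) : 0 < 1 - x * t := by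
  rcases le_or_gt x 0 with h | h
  · nlinarith
  · nlinarith

lemma betaInt (p q : ℝ) (hp : 0 < p) (hq : 0 < q) :
    IntervalIntegrable (fun t => t ^ (p - 1) * (1 - t) ^ (q - 1)) volume 0 1 := by
  have h1 : IntervalIntegrable (fun t => t ^ (p - 1) * (1 - t) ^ (q - 1)) volume 0 (1/2) := by
    apply (intervalIntegrable_rpow' (by linarith)).mul_continuousOn
    apply ContinuousOn.rpow_const (continuous_const.sub continuous_id).continuousOn
    intro t ht
    rw [uIcc_of_le (by norm_num : (0:ℝ) ≤ 1/2)] at ht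
    left
    have := ht.2
    intro hcon
    have h2 := sub_eq_zero.1 hcon
    norm_num at this h2
    linarith
  have h2 : IntervalIntegrable (fun t => t ^ (p - 1) * (1 - t) ^ (q - 1)) volume (1/2) 1 := by
    have hrq : IntervalIntegrable (fun x : ℝ => x ^ (q - 1)) volume 0 (1/2) :=
      intervalIntegrable_rpow' (by linarith)
    have h3 := hrq.comp_sub_left 1
    have e1 : (1:ℝ) - 0 = 1 := by norm_num
    have e2 : (1:ℝ) - 1/2 = 1/2 := by norm_num
    rw [e1, e2] at h3
    apply h3.symm.continuousOn_mul
    apply ContinuousOn.rpow_const continuous_id.continuousOn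
    intro t ht
    rw [uIcc_of_le (by norm_num : (1/2:ℝ) ≤ 1)] at ht
    left
    have h5 : (1:ℝ)/2 ≤ t := ht.1
    intro hcon
    simp only [id_eq] at hcon
    rw [hcon] at h5
    norm_num at h5
  exact h1.trans h2

lemma cont_rpow_base {x : ℝ} (hx : x < 1) (e : ℝ) :
    ContinuousOn (fun t : ℝ => (1 - x * t) ^ e) (uIcc 0 1) := by
  apply ContinuousOn.rpow_const (continuous_const.sub (continuous_mul_left x)).continuousOn
  intro t ht
  rw [uIcc_of_le zero_le_one] at ht
  exact Or.inl (pos_aux hx ht.1 ht.2).ne'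

lemma integrable_main (b c x : ℝ) (hb : 0 < b) (hbc : b < c) (hx : x < 1)
    {h : ℝ → ℝ} (hh : ContinuousOn h (uIcc 0 1)) :
    IntervalIntegrable (fun t => t ^ (b - 1) * (1 - t) ^ (c - b - 1) * h t) volume 0 1 :=
  (betaInt b (c - b) hb (by linarith)).mul_continuousOn hh

lemma step (b c e z : ℝ) (hb : 0 < b) (hbc : b < c) (hz : z < 1)
    (r : ℝ → ℝ) (hr : Continuous r) :
    HasDerivAt
      (fun x => ∫ t in (0:ℝ)..1, t ^ (b-1) * (1-t) ^ (c-b-1) * (r t * (1 - x*t) ^ e))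
      (∫ t in (0:ℝ)..1,
        t ^ (b-1) * (1-t) ^ (c-b-1) * (r t * (-e * (t * (1 - z*t) ^ (e-1))))) z := by
  obtain ⟨R, hR⟩ := isCompact_Icc.exists_bound_of_continuousOn
    (s := Icc (0:ℝ) 1) hr.continuousOn
  have hrm : Measurable r := hr.measurable
  set ε : ℝ := (1 - z) / 2 with hεdef
  have hε : 0 < ε := by rw [hεdef]; linarith
  set m : ℝ := min 1 ((1 - z) / 2) with hmdef
  set M : ℝ := 1 + (|z| + ε) with hMdef
  have hm0 : 0 < m := lt_min one_pos (by linarith)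
  have hball : ∀ x ∈ Metric.ball z ε, ∀ t ∈ Set.Ioc (0:ℝ) 1,
      m ≤ 1 - x * t ∧ 1 - x * t ≤ M := by
    intro x hx t ht
    rw [Metric.mem_ball, Real.dist_eq, abs_lt] at hx
    constructor
    · rcases le_or_gt x 0 with h | h
      · have h1 : x * t ≤ 0 := mul_nonpos_of_nonpos_of_nonneg h ht.1.le
        have h2 := min_le_left 1 ((1-z)/2)
        linarith
      · have h1 : x * t ≤ x := mul_le_of_le_one_right h.le ht.2
        have h2 := min_le_right 1 ((1-z)/2)
        have h3 : x < z + ε := by linarith [hx.2]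
        have h4 : z + ε = 1 - (1-z)/2 := by rw [hεdef]; ring
        linarith
    · have hx' : |x| ≤ |z| + ε := by
        calc |x| = |z + (x - z)| := by ring_nf
          _ ≤ |z| + |x - z| := abs_add_le _ _
          _ ≤ |z| + ε := by
              have : |x - z| ≤ ε := abs_le.2 ⟨by linarith [hx.1], by linarith [hx.2]⟩
              linarith
      have habs : |x * t| ≤ |z| + ε := by
        rw [abs_mul, abs_of_nonneg ht.1.le]
        calc |x| * t ≤ |x| * 1 := by
              have := abs_nonneg x
              nlinarith [ht.2]
          _ = |x| := mul_one _
          _ ≤ |z| + ε := hx'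
      have h5 := neg_abs_le (x * t)
      rw [hMdef]
      linarith
  refine (intervalIntegral.hasDerivAt_integral_of_dominated_loc_of_deriv_le (Metric.ball_mem_nhds z hε)
    (F := fun x => fun t => t ^ (b-1) * (1-t) ^ (c-b-1) * (r t * (1 - x*t) ^ e))
    (F' := fun x => fun t =>
      t ^ (b-1) * (1-t) ^ (c-b-1) * (r t * (-e * (t * (1 - x*t) ^ (e-1)))))
    (bound := fun t => t ^ (b-1) * (1-t) ^ (c-b-1) *
      (R * (|e| * (1 * max (m ^ (e-1)) (M ^ (e-1))))))
    ?_ ?_ ?_ ?_ ?_ ?_).2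
  · refine Filter.Eventually.of_forall fun x => ?_
    apply Measurable.aestronglyMeasurable
    fun_prop
  · exact integrable_main b c z hb hbc hz
      (hr.continuousOn.mul (cont_rpow_base hz e))
  · apply Measurable.aestronglyMeasurable
    fun_prop
  · refine Filter.Eventually.of_forall fun t ht x hx => ?_
    rw [Set.uIoc_of_le zero_le_one] at ht
    obtain ⟨hml, hMu⟩ := hball x hx t ht
    have hs0 : (0:ℝ) < 1 - x * t := lt_of_lt_of_le hm0 hml
    have hg0 : 0 ≤ t ^ (b-1) * (1-t) ^ (c-b-1) :=
      mul_nonneg (Real.rpow_nonneg ht.1.le _) (Real.rpow_nonneg (by linarith [ht.2]) _)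
    rw [Real.norm_eq_abs, abs_mul, abs_of_nonneg hg0]
    refine mul_le_mul_of_nonneg_left ?_ hg0
    rw [abs_mul, abs_mul, abs_mul, abs_neg, abs_of_nonneg ht.1.le,
      abs_of_nonneg (Real.rpow_nonneg hs0.le _)]
    have hK : (1 - x*t) ^ (e-1) ≤ max (m ^ (e-1)) (M ^ (e-1)) := rpow_bound hm0 hml hMu
    have h1 : t * (1 - x*t) ^ (e-1) ≤ 1 * max (m ^ (e-1)) (M ^ (e-1)) :=
      mul_le_mul ht.2 hK (Real.rpow_nonneg hs0.le _) zero_le_one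
    have h2 : |e| * (t * (1 - x*t) ^ (e-1)) ≤ |e| * (1 * max (m ^ (e-1)) (M ^ (e-1)))
      := mul_le_mul_of_nonneg_left h1 (abs_nonneg e)
    have hRt := hR t (Set.Ioc_subset_Icc_self ht)
    rw [Real.norm_eq_abs] at hRt
    refine mul_le_mul hRt h2 ?_ (le_trans (abs_nonneg _) hRt)
    exact mul_nonneg (abs_nonneg e) (mul_nonneg ht.1.le (Real.rpow_nonneg hs0.le _))
  · exact integrable_main b c z hb hbc hz continuousOn_const
  · refine Filter.Eventually.of_forall fun t ht x hx => ?_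
    rw [Set.uIoc_of_le zero_le_one] at ht
    have hs0 : (0:ℝ) < 1 - x * t := lt_of_lt_of_le hm0 (hball x hx t ht).1
    have hC : HasDerivAt (fun y : ℝ => (1 - y * t) ^ e)
        ((0 - 1 * t) * e * (1 - x * t) ^ (e - 1)) x :=
      ((hasDerivAt_const x (1:ℝ)).sub ((hasDerivAt_id x).mul_const t)).rpow_const
        (Or.inl hs0.ne')
    have h2 := (hC.const_mul (r t)).const_mul (t ^ (b-1) * (1-t) ^ (c-b-1))
    have he : (0 - 1 * t) * e * (1 - x * t) ^ (e - 1)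
        = -e * (t * (1 - x * t) ^ (e - 1)) := by ring
    rw [he] at h2
    exact h2

end EIHAux

/-- **Euler's integral representation solves the hypergeometric equation.**
For real `a, b, c` with `0 < b < c`, the function
`u(z) = ∫₀¹ t^(b-1) (1-t)^(c-b-1) (1-zt)^(-a) dt`, defined for `z < 1`, is strictly
positive and satisfies `z(1-z) u'' + (c - (a+b+1)z) u' - ab u = 0`. -/
theorem euler_integral_hypergeometric
    (a b c : ℝ) (hb : 0 < b) (hbc : b < c)
    (u : ℝ → ℝ)
    (hu : ∀ z, u z = ∫ t in (0:ℝ)..1,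
      t ^ (b - 1) * (1 - t) ^ (c - b - 1) * (1 - z*t) ^ (-a)) :
    ∀ z < (1:ℝ), 0 < u z ∧
      z*(1 - z) * deriv (deriv u) z + (c - (a + b + 1)*z) * deriv u z - a*b*u z = 0 := by
  have hcb : (0:ℝ) < c - b := by linarith
  have hueq : u = fun z => ∫ t in (0:ℝ)..1,
      t ^ (b - 1) * (1 - t) ^ (c - b - 1) * (1 - z*t) ^ (-a) := funext hu
  subst hueq
  intro z hz
  have step1 : ∀ x : ℝ, x < 1 → HasDerivAt
      (fun y => ∫ t in (0:ℝ)..1, t ^ (b - 1) * (1 - t) ^ (c - b - 1) * (1 - y*t) ^ (-a))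
      (∫ t in (0:ℝ)..1,
        t ^ (b - 1) * (1 - t) ^ (c - b - 1) * (a * t * (1 - x*t) ^ (-a-1))) x := by
    intro x hx
    have h := EIHAux.step b c (-a) x hb hbc hx (fun _ => (1:ℝ)) continuous_const
    simp only [one_mul] at h
    convert h using 1
    apply intervalIntegral.integral_congr
    intro t _
    rw [show (-a - 1 : ℝ) = -a - 1 from rfl]
    ring
  have step2 : ∀ x : ℝ, x < 1 → HasDerivAt
      (fun y => ∫ t in (0:ℝ)..1,
        t ^ (b - 1) * (1 - t) ^ (c - b - 1) * (a * t * (1 - y*t) ^ (-a-1)))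
      (∫ t in (0:ℝ)..1,
        t ^ (b - 1) * (1 - t) ^ (c - b - 1) * (a*(a+1)*(t*t) * (1 - x*t) ^ (-a-2))) x := by
    intro x hx
    have h := EIHAux.step b c (-a-1) x hb hbc hx (fun t => a * t)
      (continuous_const.mul continuous_id)
    convert h using 1
    apply intervalIntegral.integral_congr
    intro t _
    rw [show (-a - 1 - 1 : ℝ) = -a - 2 by ring]
    ring
  constructor
  · show 0 < ∫ t in (0:ℝ)..1, t ^ (b - 1) * (1 - t) ^ (c - b - 1) * (1 - z*t) ^ (-a)
    apply intervalIntegral.intervalIntegral_pos_of_pos_on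
    · exact EIHAux.integrable_main b c z hb hbc hz (EIHAux.cont_rpow_base hz (-a))
    · intro t ht
      have h1 : 0 < t ^ (b-1) := Real.rpow_pos_of_pos ht.1 _
      have h2 : 0 < (1-t) ^ (c-b-1) := Real.rpow_pos_of_pos (by linarith [ht.2]) _
      have h3 : 0 < (1 - z*t) ^ (-a) :=
        Real.rpow_pos_of_pos (EIHAux.pos_aux hz ht.1.le ht.2.le) _
      exact mul_pos (mul_pos h1 h2) h3
    · norm_num
  · have hev : deriv (fun y => ∫ t in (0:ℝ)..1,
        t ^ (b - 1) * (1 - t) ^ (c - b - 1) * (1 - y*t) ^ (-a)) =ᶠ[nhds z]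
        (fun x => ∫ t in (0:ℝ)..1,
          t ^ (b - 1) * (1 - t) ^ (c - b - 1) * (a * t * (1 - x*t) ^ (-a-1))) := by
      filter_upwards [Iio_mem_nhds hz] with x hx using (step1 x hx).deriv
    rw [hev.deriv_eq, (step2 z hz).deriv, (step1 z hz).deriv]
    show z * (1 - z) * _ + (c - (a + b + 1) * z) * _
      - a * b * (∫ t in (0:ℝ)..1, t ^ (b - 1) * (1 - t) ^ (c - b - 1) * (1 - z*t) ^ (-a)) = 0
    have hI0 : IntervalIntegrable
        (fun t => t ^ (b - 1) * (1 - t) ^ (c - b - 1) * (1 - z*t) ^ (-a)) volume 0 1 :=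
      EIHAux.integrable_main b c z hb hbc hz (EIHAux.cont_rpow_base hz (-a))
    have hI1 : IntervalIntegrable
        (fun t => t ^ (b - 1) * (1 - t) ^ (c - b - 1) * (a * t * (1 - z*t) ^ (-a-1)))
        volume 0 1 :=
      EIHAux.integrable_main b c z hb hbc hz
        (((continuous_const.mul continuous_id).continuousOn).mul
          (EIHAux.cont_rpow_base hz (-a-1)))
    have hI2 : IntervalIntegrable
        (fun t => t ^ (b - 1) * (1 - t) ^ (c - b - 1) * (a*(a+1)*(t*t) * (1 - z*t) ^ (-a-2)))
        volume 0 1 :=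
      EIHAux.integrable_main b c z hb hbc hz
        (((continuous_const.mul (continuous_id.mul continuous_id)).continuousOn).mul
          (EIHAux.cont_rpow_base hz (-a-2)))
    rw [← intervalIntegral.integral_const_mul, ← intervalIntegral.integral_const_mul,
      ← intervalIntegral.integral_const_mul,
      ← intervalIntegral.integral_add (hI2.const_mul _) (hI1.const_mul _),
      ← intervalIntegral.integral_sub ((hI2.const_mul _).add (hI1.const_mul _))
        (hI0.const_mul _)]
    have hcont : ContinuousOn
        (fun t : ℝ => -(a * (t ^ b * ((1-t) ^ (c-b) * (1 - z*t) ^ (-a-1))))) (Set.Icc 0 1) := by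
      have c1 : Continuous fun t : ℝ => t ^ b := Real.continuous_rpow_const hb.le
      have c2 : Continuous fun t : ℝ => (1-t) ^ (c-b) :=
        (Real.continuous_rpow_const hcb.le).comp (continuous_const.sub continuous_id)
      have c3 : ContinuousOn (fun t : ℝ => (1 - z*t) ^ (-a-1)) (Set.Icc 0 1) := by
        have h := EIHAux.cont_rpow_base hz (-a-1)
        rwa [Set.uIcc_of_le zero_le_one] at h
      exact (continuousOn_const.mul
        (c1.continuousOn.mul (c2.continuousOn.mul c3))).neg
    have hder : ∀ t ∈ Set.Ioo (0:ℝ) 1, HasDerivWithinAt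
        (fun t : ℝ => -(a * (t ^ b * ((1-t) ^ (c-b) * (1 - z*t) ^ (-a-1)))))
        (z*(1-z) * (t ^ (b - 1) * (1 - t) ^ (c - b - 1) * (a*(a+1)*(t*t) * (1 - z*t) ^ (-a-2)))
          + (c - (a + b + 1)*z) * (t ^ (b - 1) * (1 - t) ^ (c - b - 1)
              * (a * t * (1 - z*t) ^ (-a-1)))
          - a*b * (t ^ (b - 1) * (1 - t) ^ (c - b - 1) * (1 - z*t) ^ (-a)))
        (Set.Ioi t) t := by
      intro t ht
      have ht1 : 0 < 1 - t := by linarith [ht.2]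
      have hs : 0 < 1 - z*t := EIHAux.pos_aux hz ht.1.le ht.2.le
      have hA : HasDerivAt (fun y : ℝ => y ^ b) (b * t ^ (b-1)) t :=
        Real.hasDerivAt_rpow_const (Or.inl ht.1.ne')
      have hB : HasDerivAt (fun y : ℝ => (1-y) ^ (c-b))
          ((0 - 1) * (c-b) * (1-t) ^ (c-b-1)) t :=
        ((hasDerivAt_const t (1:ℝ)).sub (hasDerivAt_id t)).rpow_const (Or.inl ht1.ne')
      have hC : HasDerivAt (fun y : ℝ => (1 - z*y) ^ (-a-1))
          ((0 - z*1) * (-a-1) * (1 - z*t) ^ (-a-1-1)) t :=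
        ((hasDerivAt_const t (1:ℝ)).sub ((hasDerivAt_id t).const_mul z)).rpow_const
          (Or.inl hs.ne')
      have hphi := (((hA.mul (hB.mul hC)).const_mul a).neg).hasDerivWithinAt (s := Set.Ioi t)
      refine hphi.congr_deriv ?_
      rw [Pi.mul_apply]
      rw [show (-a-1-1 : ℝ) = -a-2 by ring,
        EIHAux.rpow_shift1 ht.1.ne' (show b - 1 + 1 = b by ring),
        EIHAux.rpow_shift1 ht1.ne' (show c - b - 1 + 1 = c - b by ring),
        EIHAux.rpow_shift1 hs.ne' (show -a - 2 + 1 = -a - 1 by ring),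
        EIHAux.rpow_shift2 hs.ne' (show -a - 2 + 1 + 1 = -a by ring)]
      ring
    have hkey := intervalIntegral.integral_eq_sub_of_hasDeriv_right_of_le
      zero_le_one hcont hder
      (((hI2.const_mul _).add (hI1.const_mul _)).sub (hI0.const_mul _))
    rw [hkey]
    norm_num [Real.zero_rpow hcb.ne', Real.zero_rpow hb.ne', Real.one_rpow]
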